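/- Let H be a connected 2-step nilpotent Lie group with Lie algebra 𝔥, and let Λ be a discrete subgroup of H. Then the ℤ-span of exp⁻¹(Λ) ⊆ 𝔥 is contained in (1/2)·exp⁻¹(Λ). In particular, for X₁,…,X_n ∈ exp⁻¹(Λ), one has 2(X₁+⋯+X_n) ∈ exp⁻¹(Λ). -/

import Mathlib

/-- Let `H` be a connected simply connected 2-step nilpotent Lie group with Lie algebra `𝔥`.
We identify `H` with `𝔥` via the exponential diffeomorphism, so that by the
Baker–Campbell–Hausdorff formula the group multiplication is
`x * y = x + y + ½⁅x, y⁆`. If `Λ ⊆ 𝔥` corresponds to a discrete subgroup of `H`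
(`Λ = exp⁻¹` of the subgroup), then the ℤ-span of `Λ` is contained in `½ Λ`;
in particular, for `X₁, …, X_n ∈ Λ` one has `2(X₁ + ⋯ + X_n) ∈ Λ`. -/
theorem zspan_subset_half_of_two_step
    {𝔥 : Type*} [LieRing 𝔥] [LieAlgebra ℝ 𝔥] [TopologicalSpace 𝔥]
    (h2 : ∀ x y z : 𝔥, ⁅x, ⁅y, z⁆⁆ = 0)
    (Λ : Set 𝔥) (hΛdisc : DiscreteTopology Λ)
    (hone : (0 : 𝔥) ∈ Λ)
    (hmul : ∀ x ∈ Λ, ∀ y ∈ Λ, x + y + (2⁻¹ : ℝ) • ⁅x, y⁆ ∈ Λ)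
    (hinv : ∀ x ∈ Λ, -x ∈ Λ) :
    (∀ x ∈ Submodule.span ℤ Λ, (2 : ℝ) • x ∈ Λ) ∧
      ∀ (n : ℕ) (Xs : Fin n → 𝔥), (∀ i, Xs i ∈ Λ) →
        (2 : ℝ) • (∑ i, Xs i) ∈ Λ := by
  have h2' : ∀ x y z : 𝔥, ⁅⁅x, y⁆, z⁆ = 0 := fun x y z => by
    rw [← lie_skew, h2, neg_zero]
  -- group commutator of lattice elements is the bracket
  have hcomm : ∀ x ∈ Λ, ∀ y ∈ Λ, ⁅x, y⁆ ∈ Λ := by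
    intro x hx y hy
    have h1 := hmul x hx y hy
    have hA := hmul _ h1 (-x) (hinv x hx)
    have key1 : ⁅x + y + (2⁻¹ : ℝ) • ⁅x, y⁆, -x⁆ = ⁅x, y⁆ := by
      simp only [lie_neg, add_lie, lie_self, smul_lie, h2', smul_zero, zero_add,
        add_zero, lie_skew]
    have e1 : x + y + (2⁻¹ : ℝ) • ⁅x, y⁆ + -x
        + (2⁻¹ : ℝ) • ⁅x + y + (2⁻¹ : ℝ) • ⁅x, y⁆, -x⁆ = y + ⁅x, y⁆ := by
      rw [key1]; module
    rw [e1] at hA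
    have hB := hmul _ hA (-y) (hinv y hy)
    have key2 : ⁅y + ⁅x, y⁆, -y⁆ = 0 := by
      simp only [lie_neg, add_lie, lie_self, h2', add_zero, zero_add, neg_zero]
    have e2 : y + ⁅x, y⁆ + -y + (2⁻¹ : ℝ) • ⁅y + ⁅x, y⁆, -y⁆ = ⁅x, y⁆ := by
      rw [key2]; module
    rwa [e2] at hB
  -- doubling
  have hdouble : ∀ x ∈ Λ, (2 : ℝ) • x ∈ Λ := by
    intro x hx
    have := hmul x hx x hx
    rwa [lie_self, smul_zero, add_zero, ← two_smul ℝ x] at this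
  -- key step
  have hstep : ∀ S : 𝔥, (2 : ℝ) • S ∈ Λ → ∀ X ∈ Λ, (2 : ℝ) • (S + X) ∈ Λ := by
    intro S hS X hX
    have hb := hdouble X hX
    have hc : ⁅(2 : ℝ) • S, X⁆ ∈ Λ := hcomm _ hS _ hX
    have hw := hmul _ hS _ hb
    have e1 : (2 : ℝ) • S + (2 : ℝ) • X + (2⁻¹ : ℝ) • ⁅(2 : ℝ) • S, (2 : ℝ) • X⁆
        = (2 : ℝ) • S + (2 : ℝ) • X + ⁅(2 : ℝ) • S, X⁆ := by
      rw [lie_smul]; module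
    rw [e1] at hw
    have hfin := hmul _ hw _ (hinv _ hc)
    have e2 : (2 : ℝ) • S + (2 : ℝ) • X + ⁅(2 : ℝ) • S, X⁆ + -⁅(2 : ℝ) • S, X⁆
        + (2⁻¹ : ℝ) • ⁅(2 : ℝ) • S + (2 : ℝ) • X + ⁅(2 : ℝ) • S, X⁆, -⁅(2 : ℝ) • S, X⁆⁆
        = (2 : ℝ) • (S + X) := by
      have key : ⁅(2 : ℝ) • S + (2 : ℝ) • X + ⁅(2 : ℝ) • S, X⁆, -⁅(2 : ℝ) • S, X⁆⁆
          = 0 := by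
        simp only [lie_neg, add_lie, smul_lie, lie_smul, h2, h2', lie_self,
          smul_zero, add_zero, zero_add, neg_zero]
      rw [key]; module
    rwa [e2] at hfin
  -- list sums
  have hlist : ∀ l : List 𝔥, (∀ a ∈ l, a ∈ Λ) → (2 : ℝ) • l.sum ∈ Λ := by
    intro l
    induction l with
    | nil => intro _; simpa using hone
    | cons a t ih =>
        intro h
        have := hstep t.sum (ih fun b hb => h b (List.mem_cons_of_mem a hb)) a
          (h a List.mem_cons_self)
        simpa [List.sum_cons, add_comm] using this
  have hnegsum : ∀ l : List 𝔥, (l.map (fun a => -a)).sum = -l.sum := by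
    intro l
    induction l with
    | nil => simp
    | cons a t ih =>
        simp only [List.map_cons, List.sum_cons, ih]
        abel
  constructor
  · intro x hx
    have hx' : x ∈ AddSubgroup.closure Λ := by
      rwa [← Submodule.span_int_eq_addSubgroupClosure, Submodule.mem_toAddSubgroup]
    have hp : ∃ l : List 𝔥, (∀ a ∈ l, a ∈ Λ) ∧ l.sum = x := by
      refine AddSubgroup.closure_induction ?_ ?_ ?_ ?_ hx'
      · intro y hy
        exact ⟨[y], by simpa using hy, by simp⟩
      · exact ⟨[], by simp, by simp⟩
      · rintro y z _ _ ⟨l1, hl1, rfl⟩ ⟨l2, hl2, rfl⟩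
        refine ⟨l1 ++ l2, ?_, by simp⟩
        intro a ha
        rcases List.mem_append.mp ha with h | h
        · exact hl1 a h
        · exact hl2 a h
      · rintro y _ ⟨l, hl, rfl⟩
        refine ⟨l.map (fun a => -a), ?_, ?_⟩
        · intro a ha
          obtain ⟨b, hb, rfl⟩ := List.mem_map.mp ha
          exact hinv b (hl b hb)
        · exact hnegsum l
    obtain ⟨l, hl, rfl⟩ := hp
    exact hlist l hl
  · intro n Xs hXs
    have := hlist (List.ofFn Xs) (by
      intro a ha
      obtain ⟨i, rfl⟩ := List.mem_ofFn.mp ha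
      exact hXs i)
    rwa [List.sum_ofFn] at this
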